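/- arXiv:1209.3477 — 4 statements merged into one kernel-verified Lean document; each statement's English description precedes it below -/
import Mathlib

section
/- If a matrix A over F_q defines a linear map from ℓ^⋄ (the countable direct product of copies of F_q) to ℓ (the countable direct sum), then A has only finitely many nonzero entries. -/
open Function

namespace MatAux

variable {K : Type*} [Field K]

section

variable (A : ℕ → ℕ → K)

lemma step_exists (hR : {i : ℕ | ∃ j, A i j ≠ 0}.Infinite)
    (hcol : ∀ j, {i : ℕ | A i j ≠ 0}.Finite) (L : List (ℕ × ℕ)) :
    ∃ p : ℕ × ℕ, A p.1 p.2 ≠ 0 ∧ ∀ q ∈ L, q.1 < p.1 ∧ A p.1 q.2 = 0 := by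
  have hBad : ({i : ℕ | ∃ q ∈ L, A i q.2 ≠ 0} ∪ {i : ℕ | ∃ q ∈ L, i ≤ q.1}).Finite := by
    apply Set.Finite.union
    · have : {i : ℕ | ∃ q ∈ L, A i q.2 ≠ 0} ⊆ ⋃ q ∈ L, {i : ℕ | A i q.2 ≠ 0} := by
        intro i hi; simpa using hi
      exact (Set.Finite.biUnion L.finite_toSet (fun q _ => hcol q.2)).subset this
    · have : {i : ℕ | ∃ q ∈ L, i ≤ q.1} ⊆ ⋃ q ∈ L, Set.Iic q.1 := by
        intro i hi; simpa using hi
      exact (Set.Finite.biUnion L.finite_toSet (fun q _ => Set.finite_Iic q.1)).subset this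
  obtain ⟨i, hiR, hiB⟩ := (hR.diff hBad).nonempty
  obtain ⟨j, hj⟩ := hiR
  refine ⟨(i, j), hj, fun q hq => ?_⟩
  constructor
  · by_contra hle
    exact hiB (Or.inr ⟨q, hq, Nat.le_of_not_lt hle⟩)
  · by_contra hne
    exact hiB (Or.inl ⟨q, hq, hne⟩)

variable (hR : {i : ℕ | ∃ j, A i j ≠ 0}.Infinite)
    (hcol : ∀ j, {i : ℕ | A i j ≠ 0}.Finite)

noncomputable def hist : ℕ → List (ℕ × ℕ)
  | 0 => []
  | k + 1 => (step_exists A hR hcol (hist k)).choose :: hist k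

noncomputable def iseq (k : ℕ) : ℕ := (step_exists A hR hcol (hist A hR hcol k)).choose.1
noncomputable def jseq (k : ℕ) : ℕ := (step_exists A hR hcol (hist A hR hcol k)).choose.2

lemma hist_succ (k : ℕ) :
    hist A hR hcol (k + 1) = (iseq A hR hcol k, jseq A hR hcol k) :: hist A hR hcol k := rfl

lemma A_ne (k : ℕ) : A (iseq A hR hcol k) (jseq A hR hcol k) ≠ 0 :=
  (step_exists A hR hcol (hist A hR hcol k)).choose_spec.1

lemma mem_hist {m k : ℕ} (hmk : m < k) :
    (iseq A hR hcol m, jseq A hR hcol m) ∈ hist A hR hcol k := by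
  induction k with
  | zero => omega
  | succ k ih =>
    rw [hist_succ]
    rcases Nat.lt_succ_iff_lt_or_eq.mp hmk with h | h
    · exact List.mem_cons_of_mem _ (ih h)
    · subst h; exact List.mem_cons_self

lemma lt_and_zero {m k : ℕ} (hmk : m < k) :
    iseq A hR hcol m < iseq A hR hcol k ∧ A (iseq A hR hcol k) (jseq A hR hcol m) = 0 :=
  (step_exists A hR hcol (hist A hR hcol k)).choose_spec.2 _ (mem_hist A hR hcol hmk)

lemma iseq_injective : Function.Injective (iseq A hR hcol) :=
  (strictMono_nat_of_lt_succ (fun k => (lt_and_zero A hR hcol (Nat.lt_succ_self k)).1)).injective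

lemma iseq_strictMono : StrictMono (iseq A hR hcol) :=
  strictMono_nat_of_lt_succ (fun k => (lt_and_zero A hR hcol (Nat.lt_succ_self k)).1)

lemma jseq_injective : Function.Injective (jseq A hR hcol) := by
  intro m k hjk
  by_contra hne
  rcases Nat.lt_or_ge m k with h | h
  · exact A_ne A hR hcol k (hjk ▸ (lt_and_zero A hR hcol h).2)
  · have h' : k < m := lt_of_le_of_ne h (Ne.symm hne)
    exact A_ne A hR hcol m (hjk ▸ (lt_and_zero A hR hcol h').2)

noncomputable def cfun : ℕ → ℕ → K
  | 0 => 0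
  | k + 1 => Function.update (cfun k) k
      ((A (iseq A hR hcol k) (jseq A hR hcol k))⁻¹ *
        (1 - ∑ m ∈ Finset.range k, cfun k m * A (iseq A hR hcol m) (jseq A hR hcol k)))

noncomputable def cseq (k : ℕ) : K := cfun A hR hcol (k + 1) k

lemma cfun_eq : ∀ k m, m < k → cfun A hR hcol k m = cseq A hR hcol m := by
  intro k
  induction k with
  | zero => omega
  | succ k ih =>
    intro m hm
    rcases Nat.lt_succ_iff_lt_or_eq.mp hm with h | h
    · have hne : m ≠ k := Nat.ne_of_lt h
      show Function.update (cfun A hR hcol k) k _ m = _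
      rw [Function.update_of_ne hne]
      exact ih m h
    · subst h; rfl

lemma sum_one (k : ℕ) :
    ∑ m ∈ Finset.range (k + 1), cseq A hR hcol m * A (iseq A hR hcol m) (jseq A hR hcol k) = 1 := by
  rw [Finset.sum_range_succ]
  have hS : ∑ m ∈ Finset.range k, cseq A hR hcol m * A (iseq A hR hcol m) (jseq A hR hcol k)
      = ∑ m ∈ Finset.range k, cfun A hR hcol k m * A (iseq A hR hcol m) (jseq A hR hcol k) := by
    apply Finset.sum_congr rfl
    intro m hm
    rw [cfun_eq A hR hcol k m (Finset.mem_range.mp hm)]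
  have hc : cseq A hR hcol k =
      (A (iseq A hR hcol k) (jseq A hR hcol k))⁻¹ *
        (1 - ∑ m ∈ Finset.range k, cfun A hR hcol k m * A (iseq A hR hcol m) (jseq A hR hcol k)) := by
    show Function.update (cfun A hR hcol k) k _ k = _
    rw [Function.update_self]
  rw [hS, hc, mul_comm, ← mul_assoc, mul_inv_cancel₀ (A_ne A hR hcol k), one_mul]
  ring

end

end MatAux

/-- If a matrix `A` over `F_q` defines a linear map from `ℓ^⋄ = ∏_{j∈ℕ} F_q` to
`ℓ = ⊕_{j∈ℕ} F_q` (i.e. for every sequence `w`, each sum `∑ᵢ wᵢ aᵢⱼ` has only finitely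
many nonzero summands, and the resulting sequence `j ↦ ∑ᵢ wᵢ aᵢⱼ` is finitely supported),
then `A` has only finitely many nonzero entries. -/
theorem matrix_prod_to_directSum_finite (K : Type*) [Field K] [Fintype K]
    (A : ℕ → ℕ → K)
    (h : ∀ w : ℕ → K,
        (∀ j, (Function.support fun i => w i * A i j).Finite) ∧
        (Function.support fun j => ∑ᶠ i, w i * A i j).Finite) :
    (Function.support fun p : ℕ × ℕ => A p.1 p.2).Finite := by
  classical
  -- columns are finitely supported
  have hcol : ∀ j, {i : ℕ | A i j ≠ 0}.Finite := by
    intro j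
    have := (h 1).1 j
    simpa [Function.support] using this
  -- rows are finitely supported
  have hrow : ∀ i, {j : ℕ | A i j ≠ 0}.Finite := by
    intro i
    have key : (fun j => ∑ᶠ n, (fun n => if n = i then (1 : K) else 0) n * A n j)
        = fun j => A i j := by
      funext j
      rw [finsum_eq_single (fun n => (if n = i then (1 : K) else 0) * A n j) i
        (fun b hb => by simp [hb])]
      simp
    have := (h (fun n => if n = i then (1 : K) else 0)).2
    rw [key] at this
    simpa [Function.support] using this
  by_contra hfin
  -- nonzero rows are infinite
  have hR : {i : ℕ | ∃ j, A i j ≠ 0}.Infinite := by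
    intro hRfin
    apply hfin
    have hsub : (Function.support fun p : ℕ × ℕ => A p.1 p.2) ⊆
        {i : ℕ | ∃ j, A i j ≠ 0} ×ˢ (⋃ i ∈ {i : ℕ | ∃ j, A i j ≠ 0}, {j : ℕ | A i j ≠ 0}) := by
      rintro ⟨i, j⟩ hp
      have hp' : A i j ≠ 0 := hp
      exact ⟨⟨j, hp'⟩, Set.mem_biUnion ⟨j, hp'⟩ hp'⟩
    exact ((hRfin.prod (hRfin.biUnion (fun i _ => hrow i))).subset hsub)
  -- build the diagonal sequences
  set iseq := MatAux.iseq A hR hcol with hiseq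
  set jseq := MatAux.jseq A hR hcol with hjseq
  set cseq := MatAux.cseq A hR hcol with hcseq
  have iinj : Function.Injective iseq := MatAux.iseq_injective A hR hcol
  have jinj : Function.Injective jseq := MatAux.jseq_injective A hR hcol
  -- the witness sequence
  set w : ℕ → K := fun n => if hn : ∃ k, iseq k = n then cseq hn.choose else 0 with hw
  have w_apply : ∀ k, w (iseq k) = cseq k := by
    intro k
    have hn : ∃ m, iseq m = iseq k := ⟨k, rfl⟩
    have : hn.choose = k := iinj hn.choose_spec
    simp only [hw, dif_pos hn, this]
  have key : ∀ k, (∑ᶠ n, w n * A n (jseq k)) = 1 := by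
    intro k
    have hsupp : (Function.support fun n => w n * A n (jseq k)) ⊆
        ↑((Finset.range (k + 1)).image iseq) := by
      intro n hn
      have hwn : w n ≠ 0 := fun h0 => hn (by simp [h0])
      have hAn : A n (jseq k) ≠ 0 := fun h0 => hn (by simp [h0])
      have hex : ∃ m, iseq m = n := by
        by_contra hne
        exact hwn (dif_neg hne)
      obtain ⟨m, rfl⟩ := hex
      have hmk : m ≤ k := by
        by_contra hgt
        exact hAn (MatAux.lt_and_zero A hR hcol (Nat.lt_of_not_le hgt)).2
      simp only [Finset.coe_image, Set.mem_image, Finset.mem_coe, Finset.mem_range]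
      exact ⟨m, Nat.lt_succ_of_le hmk, rfl⟩
    rw [finsum_eq_finset_sum_of_support_subset _ hsupp,
      Finset.sum_image (fun a _ b _ hab => iinj hab)]
    have : ∀ m ∈ Finset.range (k + 1), w (iseq m) * A (iseq m) (jseq k)
        = cseq m * A (iseq m) (jseq k) := fun m _ => by rw [w_apply]
    rw [Finset.sum_congr rfl this]
    exact MatAux.sum_one A hR hcol k
  have hmem : Set.range jseq ⊆ Function.support fun j => ∑ᶠ i, w i * A i j := by
    rintro _ ⟨k, rfl⟩
    simp only [Function.mem_support, key k]
    exact one_ne_zero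
  exact (Set.infinite_range_of_injective jinj).mono hmem (h w).2
end

section
/- A linear operator A : ℓ → ℓ on a countable-dimensional vector space is Fredholm if and only if there exist surjections/injections realizing it in the canonical form A = g₁ J g₂ with g₁, g₂ invertible and J the block (α+∞)×(β+∞) matrix (0 0; 0 1) with finite α, β; moreover in this case β = dim ker A and α = codim im A. -/
namespace FredholmAux

open Finsupp LinearMap

variable (F : Type*) [Field F]

lemma add_inj (β : ℕ) : Function.Injective (fun j => β + j : ℕ → ℕ) :=
  fun a b h => by simpa using h

/-- drop first β coords and shift down -/
noncomputable def D (β : ℕ) : (ℕ →₀ F) →ₗ[F] (ℕ →₀ F) :=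
  Finsupp.lcomapDomain (fun j => β + j) (add_inj β)

/-- shift up by α -/
noncomputable def U (α : ℕ) : (ℕ →₀ F) →ₗ[F] (ℕ →₀ F) :=
  Finsupp.lmapDomain F F (fun j => α + j)

noncomputable def J0 (α β : ℕ) : (ℕ →₀ F) →ₗ[F] (ℕ →₀ F) := U F α ∘ₗ D F β

@[simp] lemma D_apply (β : ℕ) (x : ℕ →₀ F) (j : ℕ) : D F β x j = x (β + j) := rfl

@[simp] lemma U_apply_add (α : ℕ) (x : ℕ →₀ F) (j : ℕ) : U F α x (α + j) = x j :=
  Finsupp.mapDomain_apply (add_inj α) x j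

lemma U_apply_lt (α : ℕ) (x : ℕ →₀ F) (k : ℕ) (hk : k < α) : U F α x k = 0 :=
  Finsupp.mapDomain_notin_range x k (by rintro ⟨j, rfl⟩; exact absurd hk (by simp))

lemma U_injective (α : ℕ) : Function.Injective (U F α) :=
  Finsupp.mapDomain_injective (add_inj α)

lemma J0_single (α β j : ℕ) :
    J0 F α β (Finsupp.single j 1) =
      if j < β then 0 else Finsupp.single (α + (j - β)) 1 := by
  ext k
  simp only [J0, LinearMap.comp_apply]
  rcases lt_or_ge k α with hk | hk
  · rw [U_apply_lt F α _ k hk]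
    split_ifs with h
    · simp
    · rw [Finsupp.single_apply]
      have : ¬ α + (j - β) = k := by omega
      simp [this]
  · obtain ⟨m, rfl⟩ := Nat.exists_eq_add_of_le hk
    rw [U_apply_add, D_apply]
    rcases lt_or_ge j β with h | h
    · rw [if_pos h]
      rw [Finsupp.single_apply, Finsupp.coe_zero]
      have : ¬ j = β + m := by omega
      simp [this]
    · rw [if_neg (not_lt.mpr h), Finsupp.single_apply, Finsupp.single_apply]
      by_cases hjm : j = β + m
      · have : α + (j - β) = α + m := by omega
        simp [hjm, this]
      · have : ¬ α + (j - β) = α + m := by omega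
        have : ¬ j - β = m := by omega
        simp [hjm, this]

lemma eq_J0 (α β : ℕ) (J : (ℕ →₀ F) →ₗ[F] (ℕ →₀ F))
    (hJ : ∀ j : ℕ, J (Finsupp.single j 1) =
      if j < β then 0 else Finsupp.single (α + (j - β)) 1) : J = J0 F α β := by
  refine Finsupp.lhom_ext' fun j => LinearMap.ext_ring ?_
  simp only [LinearMap.comp_apply, Finsupp.lsingle_apply]
  rw [hJ j, J0_single]

lemma ker_J0 (α β : ℕ) :
    LinearMap.ker (J0 F α β) = Finsupp.supported F F (Set.Iio β) := by
  have hU : LinearMap.ker (J0 F α β) = LinearMap.ker (D F β) := by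
    rw [J0, LinearMap.ker_comp, LinearMap.ker_eq_bot.mpr (U_injective F α),
      Submodule.comap_bot]
  rw [hU]
  ext x
  simp only [LinearMap.mem_ker, Finsupp.mem_supported]
  constructor
  · intro h k hk
    simp only [Finset.mem_coe, Finsupp.mem_support_iff] at hk
    simp only [Set.mem_Iio]
    by_contra hlt
    have h2 : x (β + (k - β)) = 0 := by simpa using DFunLike.congr_fun h (k - β)
    rw [(by omega : β + (k - β) = k)] at h2
    exact hk h2
  · intro h
    ext j
    simp only [D_apply, Finsupp.coe_zero, Pi.zero_apply]
    by_contra hx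
    have := h (Finsupp.mem_support_iff.mpr hx)
    simp only [Set.mem_Iio] at this
    omega

lemma range_U (α : ℕ) :
    LinearMap.range (U F α) = Finsupp.supported F F (Set.Ici α) := by
  ext x
  constructor
  · rintro ⟨y, rfl⟩
    intro k hk
    simp only [Finset.mem_coe, Finsupp.mem_support_iff] at hk
    simp only [Set.mem_Ici]
    by_contra h
    exact hk (U_apply_lt F α y k (by omega))
  · intro hx
    refine ⟨D F α x, ?_⟩
    ext k
    rcases lt_or_ge k α with hk | hk
    · rw [U_apply_lt F α _ k hk]
      by_contra h
      have := hx (Finsupp.mem_support_iff.mpr (fun hh => h hh.symm))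
      simp only [Set.mem_Ici] at this; omega
    · obtain ⟨m, rfl⟩ := Nat.exists_eq_add_of_le hk
      rw [U_apply_add, D_apply]

lemma D_surjective (β : ℕ) : Function.Surjective (D F β) := by
  intro x
  refine ⟨U F β x, ?_⟩
  ext j
  rw [D_apply, U_apply_add]

lemma range_J0 (α β : ℕ) :
    LinearMap.range (J0 F α β) = Finsupp.supported F F (Set.Ici α) := by
  rw [J0, LinearMap.range_comp, LinearMap.range_eq_top.mpr (D_surjective F β),
    Submodule.map_top, range_U]

end FredholmAux

namespace FredholmAux

variable (F : Type*) [Field F]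

noncomputable def suppIioEquiv (n : ℕ) :
    (Finsupp.supported F F (Set.Iio n)) ≃ₗ[F] (Fin n → F) :=
  (Finsupp.supportedEquivFinsupp (Set.Iio n)).trans
    ((Finsupp.domLCongr
      (⟨fun x => ⟨x.1, x.2⟩, fun i => ⟨i.1, i.2⟩, fun _ => rfl, fun _ => rfl⟩ :
        (Set.Iio n : Set ℕ) ≃ Fin n)).trans
      (Finsupp.linearEquivFunOnFinite F F (Fin n)))

instance fd_supported_Iio (n : ℕ) :
    FiniteDimensional F (Finsupp.supported F F (Set.Iio n)) :=
  Module.Finite.equiv (suppIioEquiv F n).symm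

lemma finrank_supported_Iio (n : ℕ) :
    Module.finrank F (Finsupp.supported F F (Set.Iio n)) = n := by
  rw [(suppIioEquiv F n).finrank_eq, Module.finrank_fin_fun]

lemma isCompl_supported (α : ℕ) :
    IsCompl (Finsupp.supported F F (Set.Ici α)) (Finsupp.supported F F (Set.Iio α)) := by
  constructor
  · exact Finsupp.disjoint_supported_supported (Set.Iio_disjoint_Ici le_rfl).symm
  · rw [codisjoint_iff, ← Finsupp.supported_union,
      (by ext k; simp : Set.Ici α ∪ Set.Iio α = Set.univ),
      Finsupp.supported_univ]

noncomputable def quotEquiv (α : ℕ) :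
    ((ℕ →₀ F) ⧸ Finsupp.supported F F (Set.Ici α)) ≃ₗ[F]
      (Finsupp.supported F F (Set.Iio α)) :=
  Submodule.quotientEquivOfIsCompl _ _ (isCompl_supported F α)

end FredholmAux

namespace FredholmAux

variable {F : Type*} [Field F]

lemma ker_A (α β : ℕ) (A : (ℕ →₀ F) →ₗ[F] (ℕ →₀ F))
    (g₁ g₂ : (ℕ →₀ F) ≃ₗ[F] (ℕ →₀ F))
    (hA : A = g₂.toLinearMap ∘ₗ J0 F α β ∘ₗ g₁.toLinearMap) :
    LinearMap.ker A = Submodule.map (g₁.symm : (ℕ →₀ F) →ₗ[F] (ℕ →₀ F))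
      (Finsupp.supported F F (Set.Iio β)) := by
  rw [hA, LinearMap.ker_comp_of_ker_eq_bot _ g₂.ker, LinearMap.ker_comp, ker_J0,
    Submodule.comap_equiv_eq_map_symm]

lemma range_A (α β : ℕ) (A : (ℕ →₀ F) →ₗ[F] (ℕ →₀ F))
    (g₁ g₂ : (ℕ →₀ F) ≃ₗ[F] (ℕ →₀ F))
    (hA : A = g₂.toLinearMap ∘ₗ J0 F α β ∘ₗ g₁.toLinearMap) :
    LinearMap.range A = Submodule.map (g₂ : (ℕ →₀ F) →ₗ[F] (ℕ →₀ F))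
      (Finsupp.supported F F (Set.Ici α)) := by
  rw [hA, LinearMap.range_comp, LinearMap.range_comp, LinearEquiv.range,
    Submodule.map_top, range_J0]

theorem backward (α β : ℕ) (A : (ℕ →₀ F) →ₗ[F] (ℕ →₀ F))
    (g₁ g₂ : (ℕ →₀ F) ≃ₗ[F] (ℕ →₀ F))
    (hA : A = g₂.toLinearMap ∘ₗ J0 F α β ∘ₗ g₁.toLinearMap) :
    (FiniteDimensional F (LinearMap.ker A) ∧
      FiniteDimensional F ((ℕ →₀ F) ⧸ LinearMap.range A)) ∧
    β = Module.finrank F (LinearMap.ker A) ∧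
    α = Module.finrank F ((ℕ →₀ F) ⧸ LinearMap.range A) := by
  have ek : (Finsupp.supported F F (Set.Iio β)) ≃ₗ[F] LinearMap.ker A :=
    (g₁.symm.submoduleMap _).trans (LinearEquiv.ofEq _ _ (ker_A α β A g₁ g₂ hA).symm)
  have eq : ((ℕ →₀ F) ⧸ LinearMap.range A) ≃ₗ[F]
      (Finsupp.supported F F (Set.Iio α)) :=
    (Submodule.Quotient.equiv (Finsupp.supported F F (Set.Ici α)) (LinearMap.range A)
      g₂ (range_A α β A g₁ g₂ hA).symm).symm.trans (quotEquiv F α)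
  refine ⟨⟨Module.Finite.equiv ek, Module.Finite.equiv eq.symm⟩, ?_, ?_⟩
  · rw [← ek.finrank_eq, finrank_supported_Iio]
  · rw [eq.finrank_eq, finrank_supported_Iio]

end FredholmAux

namespace FredholmAux

variable (F : Type*) [Field F]

def splitEquiv (n : ℕ) : Fin n ⊕ ℕ ≃ ℕ where
  toFun x := Sum.elim (fun i : Fin n => (i : ℕ)) (fun j => n + j) x
  invFun k := if h : k < n then Sum.inl ⟨k, h⟩ else Sum.inr (k - n)
  left_inv := by
    rintro (i | j)
    · simp [i.isLt]
    · have : ¬ n + j < n := by omega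
      simp [this]
  right_inv k := by
    by_cases h : k < n
    · simp [h]
    · have : n + (k - n) = k := by omega
      simp [h, this]

noncomputable def S (n : ℕ) : ((Fin n →₀ F) × (ℕ →₀ F)) ≃ₗ[F] (ℕ →₀ F) :=
  (Finsupp.sumFinsuppLEquivProdFinsupp F).symm.trans
    (Finsupp.domLCongr (splitEquiv n))

lemma S_apply_add (n : ℕ) (x : Fin n →₀ F) (y : ℕ →₀ F) (j : ℕ) :
    S F n (x, y) (n + j) = y j := by
  simp only [S, LinearEquiv.trans_apply, Finsupp.domLCongr_apply,
    Finsupp.domCongr_apply, Finsupp.equivMapDomain_apply]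
  have h : (splitEquiv n).symm (n + j) = Sum.inr j := by
    rw [Equiv.symm_apply_eq]
    simp [splitEquiv]
  rw [h]
  rfl

lemma S_apply_lt (n : ℕ) (x : Fin n →₀ F) (y : ℕ →₀ F) (k : ℕ) (h : k < n) :
    S F n (x, y) k = x ⟨k, h⟩ := by
  simp only [S, LinearEquiv.trans_apply, Finsupp.domLCongr_apply,
    Finsupp.domCongr_apply, Finsupp.equivMapDomain_apply]
  have h2 : (splitEquiv n).symm k = Sum.inl ⟨k, h⟩ := by
    rw [Equiv.symm_apply_eq]
    simp [splitEquiv]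
  rw [h2]
  rfl

lemma D_S (n : ℕ) (x : Fin n →₀ F) (y : ℕ →₀ F) : D F n (S F n (x, y)) = y := by
  ext j
  rw [D_apply, S_apply_add]

lemma S_zero (n : ℕ) (y : ℕ →₀ F) : S F n (0, y) = U F n y := by
  ext k
  rcases lt_or_ge k n with h | h
  · rw [S_apply_lt F n _ _ k h, U_apply_lt F n y k h]
    rfl
  · obtain ⟨m, rfl⟩ := Nat.exists_eq_add_of_le h
    rw [S_apply_add, U_apply_add]

lemma J0_S (α β : ℕ) (x : Fin β →₀ F) (y : ℕ →₀ F) :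
    J0 F α β (S F β (x, y)) = S F α (0, y) := by
  rw [S_zero]
  simp only [J0, LinearMap.comp_apply]
  rw [D_S]

lemma rank_compl {K W : Submodule F (ℕ →₀ F)} (hfd : FiniteDimensional F K)
    (h : IsCompl K W) : Module.rank F W = Cardinal.aleph0 := by
  have h1 : Module.rank F (ℕ →₀ F) = Cardinal.aleph0 := by
    simp [rank_finsupp_self]
  have fK := Module.Free.of_divisionRing F ↥K
  have fW := Module.Free.of_divisionRing F ↥W
  have h2 : Module.rank F K + Module.rank F W = Cardinal.aleph0 := by
    have h4 : Module.rank F (↥K × ↥W) = Module.rank F (ℕ →₀ F) :=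
      LinearEquiv.rank_eq (R := F) (M := ↥K × ↥W) (M₁ := (ℕ →₀ F))
        (Submodule.prodEquivOfIsCompl K W h)
    exact (rank_prod' (R := F) (M := ↥K) (M₁ := ↥W)).symm.trans (h4.trans h1)
  have hK : Module.rank F K < Cardinal.aleph0 := Module.rank_lt_aleph0 F K
  refine le_antisymm ?_ ?_
  · rw [← h2]; exact le_add_self
  · by_contra hlt
    push_neg at hlt
    exact absurd h2 (Cardinal.add_lt_aleph0 hK hlt).ne

end FredholmAux

namespace FredholmAux

variable {F : Type*} [Field F]

theorem forward (A : (ℕ →₀ F) →ₗ[F] (ℕ →₀ F))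
    (h1 : FiniteDimensional F (LinearMap.ker A))
    (h2 : FiniteDimensional F ((ℕ →₀ F) ⧸ LinearMap.range A)) :
    ∃ (g₁ g₂ : (ℕ →₀ F) ≃ₗ[F] (ℕ →₀ F)),
      A = g₂.toLinearMap ∘ₗ
        J0 F (Module.finrank F ((ℕ →₀ F) ⧸ LinearMap.range A))
             (Module.finrank F (LinearMap.ker A)) ∘ₗ g₁.toLinearMap := by
  classical
  set K := LinearMap.ker A with hKdef
  set R := LinearMap.range A with hRdef
  set β := Module.finrank F K with hβ
  set α := Module.finrank F ((ℕ →₀ F) ⧸ R) with hα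
  obtain ⟨W, hKW⟩ := Submodule.exists_isCompl K
  obtain ⟨Usub, hRU⟩ := Submodule.exists_isCompl R
  have hfreeK := Module.Free.of_divisionRing F ↥K
  have hfreeU := Module.Free.of_divisionRing F ↥Usub
  have eQU : ((ℕ →₀ F) ⧸ R) ≃ₗ[F] Usub := Submodule.quotientEquivOfIsCompl R Usub hRU
  have hUfd : FiniteDimensional F Usub := Module.Finite.equiv eQU
  have hUrank : Module.finrank F Usub = α := eQU.finrank_eq.symm
  let eK : K ≃ₗ[F] (Fin β →₀ F) := (Module.finBasis F K).repr
  let eU : Usub ≃ₗ[F] (Fin α →₀ F) := (Module.finBasisOfFinrankEq F Usub hUrank).repr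
  have hWrank : Module.rank F W = Cardinal.aleph0 := rank_compl (F := F) h1 hKW
  have hfreeW := Module.Free.of_divisionRing F ↥W
  have hl : Module.rank F (ℕ →₀ F) = Cardinal.aleph0 := by simp [rank_finsupp_self]
  let eW : W ≃ₗ[F] (ℕ →₀ F) :=
    Classical.choice (nonempty_linearEquiv_of_rank_eq (R := F) (M := ↥W)
      (M₁ := (ℕ →₀ F)) (by rw [hWrank, hl]))
  -- the restriction of A to W, as an equivalence onto R
  let m0 : W →ₗ[F] R :=
    (A.domRestrict W).codRestrict R (fun w => LinearMap.mem_range_self A w.1)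
  have m0_apply : ∀ w : W, (m0 w : ℕ →₀ F) = A w.1 := fun w => rfl
  have minj : Function.Injective m0 := by
    intro w1 w2 hw
    have h12 : A ((w1 : ℕ →₀ F) - w2) = 0 := by
      rw [map_sub, sub_eq_zero]
      exact congrArg Subtype.val hw
    have hmem : ((w1 : ℕ →₀ F) - w2) ∈ K := LinearMap.mem_ker.mpr h12
    have hmemW : ((w1 : ℕ →₀ F) - w2) ∈ W := sub_mem w1.2 w2.2
    have := Submodule.disjoint_def.mp hKW.disjoint _ hmem hmemW
    exact Subtype.ext (sub_eq_zero.mp this)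
  have msurj : Function.Surjective m0 := by
    rintro ⟨r, v, rfl⟩
    obtain ⟨k, w, hk, hw, hsum⟩ := Submodule.codisjoint_iff_exists_add_eq.mp hKW.codisjoint v
    refine ⟨⟨w, hw⟩, Subtype.ext ?_⟩
    rw [m0_apply]
    have hk0 : A k = 0 := LinearMap.mem_ker.mp hk
    calc A w = A k + A w := by rw [hk0, zero_add]
      _ = A v := by rw [← map_add, hsum]
  let AW : W ≃ₗ[F] R := LinearEquiv.ofBijective m0 ⟨minj, msurj⟩
  let g₁ : (ℕ →₀ F) ≃ₗ[F] (ℕ →₀ F) :=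
    (Submodule.prodEquivOfIsCompl K W hKW).symm.trans ((eK.prodCongr eW).trans (S F β))
  let g₂ : (ℕ →₀ F) ≃ₗ[F] (ℕ →₀ F) :=
    (S F α).symm.trans ((eU.symm.prodCongr (eW.symm.trans AW)).trans
      (Submodule.prodEquivOfIsCompl Usub R hRU.symm))
  refine ⟨g₁, g₂, ?_⟩
  apply LinearMap.ext
  intro v
  obtain ⟨k, w, hk, hw, hsum⟩ := Submodule.codisjoint_iff_exists_add_eq.mp hKW.codisjoint v
  have hg1 : g₁ v = S F β (eK ⟨k, hk⟩, eW ⟨w, hw⟩) := by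
    have hv : (Submodule.prodEquivOfIsCompl K W hKW).symm v = (⟨k, hk⟩, ⟨w, hw⟩) := by
      rw [LinearEquiv.symm_apply_eq, Submodule.coe_prodEquivOfIsCompl']
      exact hsum.symm
    simp only [g₁, LinearEquiv.trans_apply, hv, LinearEquiv.prodCongr_apply]
  have hAk : A k = 0 := LinearMap.mem_ker.mp hk
  have hAv : A v = A w := by
    rw [← hsum, map_add, hAk, zero_add]
  simp only [LinearMap.comp_apply, LinearEquiv.coe_coe]
  rw [hg1, J0_S]
  simp only [g₂, LinearEquiv.trans_apply, LinearEquiv.symm_apply_apply,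
    LinearEquiv.prodCongr_apply, map_zero, Submodule.coe_prodEquivOfIsCompl',
    Submodule.coe_zero, zero_add]
  rw [hAv]
  rfl

end FredholmAux


/-- An operator is Fredholm if its kernel is finite-dimensional and its image has finite
codimension. -/
def IsFredholm {F V : Type*} [Field F] [AddCommGroup V] [Module F V]
    (A : V →ₗ[F] V) : Prop :=
  FiniteDimensional F (LinearMap.ker A) ∧ FiniteDimensional F (V ⧸ LinearMap.range A)

/-- A linear operator `A` on `ℓ = ⊕_{j∈ℕ} F` is Fredholm if and only if it can be written
as `A = g₁ J g₂` with `g₁, g₂` invertible and `J` the canonical block matrix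
`(0 0; 0 1)` of size `(α+∞)×(β+∞)` (sending the first `β` basis vectors to `0` and the
remaining ones bijectively onto the basis vectors of index `≥ α`); moreover in any such
representation `β = dim ker A` and `α = codim im A`. -/
theorem fredholm_iff_canonical_form (F : Type*) [Field F] (A : (ℕ →₀ F) →ₗ[F] (ℕ →₀ F)) :
    (IsFredholm A ↔
      ∃ (α β : ℕ) (g₁ g₂ : (ℕ →₀ F) ≃ₗ[F] (ℕ →₀ F)) (J : (ℕ →₀ F) →ₗ[F] (ℕ →₀ F)),
        (∀ j : ℕ, J (Finsupp.single j 1) =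
          if j < β then 0 else Finsupp.single (α + (j - β)) 1) ∧
        A = g₂.toLinearMap ∘ₗ J ∘ₗ g₁.toLinearMap) ∧
    (∀ (α β : ℕ) (g₁ g₂ : (ℕ →₀ F) ≃ₗ[F] (ℕ →₀ F)) (J : (ℕ →₀ F) →ₗ[F] (ℕ →₀ F)),
        (∀ j : ℕ, J (Finsupp.single j 1) =
          if j < β then 0 else Finsupp.single (α + (j - β)) 1) →
        A = g₂.toLinearMap ∘ₗ J ∘ₗ g₁.toLinearMap →
        β = Module.finrank F (LinearMap.ker A) ∧
        α = Module.finrank F ((ℕ →₀ F) ⧸ LinearMap.range A)) := by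
  constructor
  · constructor
    · rintro ⟨h1, h2⟩
      obtain ⟨g₁, g₂, hA⟩ := FredholmAux.forward A h1 h2
      exact ⟨_, _, g₁, g₂, _, fun j => FredholmAux.J0_single F _ _ j, hA⟩
    · rintro ⟨α, β, g₁, g₂, J, hJ, hA⟩
      rw [FredholmAux.eq_J0 F α β J hJ] at hA
      exact (FredholmAux.backward α β A g₁ g₂ hA).1
  · intro α β g₁ g₂ J hJ hA
    rw [FredholmAux.eq_J0 F α β J hJ] at hA
    exact (FredholmAux.backward α β A g₁ g₂ hA).2
end

section
/- Let T : V → W be a linear map and g an invertible linear map of V ⊕ W written in block form (a b; c d), with a + Tc invertible (as a map V → V). Then the image of the graph of T under g equals the graph of the map (a+Tc)^{-1}(b+Td), i.e., graph(T)·g = graph((a+Tc)^{-1}(b+Td)). -/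
/-- Linear-fractional action on graphs.  Let `T : V → W` be linear and let `g` be an
invertible linear map of `V ⊕ W` with block form `(a b; c d)` (row-vector convention:
`(v, w) · g = (v a + w c, v b + w d)`).  If `a + Tc` is invertible, then the image of the
graph of `T` under `g` is the graph of `(a + Tc)⁻¹ (b + Td)`. -/
theorem graph_linear_fractional {K V W : Type*} [Field K]
    [AddCommGroup V] [Module K V] [AddCommGroup W] [Module K W]
    (T : V →ₗ[K] W) (g : (V × W) ≃ₗ[K] (V × W))
    (a : V →ₗ[K] V) (b : V →ₗ[K] W) (c : W →ₗ[K] V) (d : W →ₗ[K] W)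
    (hg : ∀ p : V × W, g p = (a p.1 + c p.2, b p.1 + d p.2))
    (e : V ≃ₗ[K] V) (he : (e : V →ₗ[K] V) = a + c ∘ₗ T) :
    Submodule.map (g : (V × W) →ₗ[K] (V × W)) (LinearMap.graph T) =
      LinearMap.graph ((b + d ∘ₗ T) ∘ₗ (e.symm : V →ₗ[K] V)) := by
  have he' : ∀ v : V, e v = a v + c (T v) := by
    intro v
    have := congrFun (congrArg DFunLike.coe he) v
    simpa using this
  ext ⟨x, y⟩
  simp only [Submodule.mem_map, LinearMap.mem_graph_iff, LinearMap.coe_comp,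
    LinearMap.add_apply, Function.comp_apply, LinearEquiv.coe_coe]
  constructor
  · rintro ⟨⟨v, w⟩, hw, hgv⟩
    simp only at hw
    subst hw
    rw [hg] at hgv
    simp only at hgv
    obtain ⟨h1, h2⟩ : a v + c (T v) = x ∧ b v + d (T v) = y := Prod.mk.injEq .. ▸ hgv
    have hev : e v = x := by rw [he', h1]
    have hv : v = e.symm x := by rw [← hev, e.symm_apply_apply]
    subst hv
    exact h2.symm
  · intro hy
    refine ⟨(e.symm x, T (e.symm x)), rfl, ?_⟩
    rw [hg]
    simp only
    rw [← he', e.apply_symm_apply, hy]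
end

section
/- For a fixed k, the normalized count q^{-n^2} · #{n-dimensional subspaces L of F_q^{2n} with dim(L ∩ (0 ⊕ F_q^n)) = k} converges as n → ∞ to q^{-k^2} / ∏_{j=1}^k (1 − q^{-j})^2. -/
open Filter


open Submodule LinearMap

section goursat
variable {K M N : Type*} [Field K] [AddCommGroup M] [Module K M] [AddCommGroup N] [Module K N]

/-- The submodule of `M × N` determined by `(W, U, f)`. -/
def graphSub (W : Submodule K N) (U : Submodule K M) (f : U →ₗ[K] N ⧸ W) :
    Submodule K (M × N) where
  carrier := {x | ∃ h : x.1 ∈ U, Submodule.Quotient.mk x.2 = f ⟨x.1, h⟩}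
  zero_mem' := ⟨U.zero_mem, by rw [show (⟨(0 : M × N).1, U.zero_mem⟩ : U) = 0 from rfl, map_zero]; rfl⟩
  add_mem' := by
    rintro a b ⟨ha, ha2⟩ ⟨hb, hb2⟩
    refine ⟨U.add_mem ha hb, ?_⟩
    have : (⟨(a + b).1, U.add_mem ha hb⟩ : U) = ⟨a.1, ha⟩ + ⟨b.1, hb⟩ := rfl
    rw [this, map_add, ← ha2, ← hb2]
    rfl
  smul_mem' := by
    rintro c a ⟨ha, ha2⟩
    refine ⟨U.smul_mem c ha, ?_⟩
    have : (⟨(c • a).1, U.smul_mem c ha⟩ : U) = c • ⟨a.1, ha⟩ := rfl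
    rw [this, map_smul, ← ha2]
    rfl

lemma mem_graphSub {W : Submodule K N} {U : Submodule K M} {f : U →ₗ[K] N ⧸ W} {x : M × N} :
    x ∈ graphSub W U f ↔ ∃ h : x.1 ∈ U, Submodule.Quotient.mk x.2 = f ⟨x.1, h⟩ := Iff.rfl

lemma inr_mem_graphSub {W : Submodule K N} {U : Submodule K M} {f : U →ₗ[K] N ⧸ W} {b : N} :
    ((0, b) : M × N) ∈ graphSub W U f ↔ b ∈ W := by
  rw [mem_graphSub]
  constructor
  · rintro ⟨h, hb⟩
    rw [show (⟨((0 : M), b).1, h⟩ : U) = 0 from rfl, map_zero] at hb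
    exact (Submodule.Quotient.mk_eq_zero W).mp hb
  · intro hb
    refine ⟨U.zero_mem, ?_⟩
    rw [show (⟨((0 : M), b).1, U.zero_mem⟩ : U) = 0 from rfl, map_zero]
    exact (Submodule.Quotient.mk_eq_zero W).mpr hb

lemma graphSub_comap_inr (W : Submodule K N) (U : Submodule K M) (f : U →ₗ[K] N ⧸ W) :
    (graphSub W U f).comap (LinearMap.inr K M N) = W := by
  ext b
  simpa only [Submodule.mem_comap, inr_apply] using inr_mem_graphSub

lemma graphSub_map_fst (W : Submodule K N) (U : Submodule K M) (f : U →ₗ[K] N ⧸ W) :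
    (graphSub W U f).map (LinearMap.fst K M N) = U := by
  ext u
  simp only [Submodule.mem_map, fst_apply, Prod.exists, exists_and_right, exists_eq_right]
  constructor
  · rintro ⟨b, h, -⟩; exact h
  · intro hu
    obtain ⟨b, hb⟩ := Submodule.Quotient.mk_surjective W (f ⟨u, hu⟩)
    exact ⟨b, hu, hb⟩

lemma graphSub_inf_snd (W : Submodule K N) (U : Submodule K M) (f : U →ₗ[K] N ⧸ W) :
    graphSub W U f ⊓ Submodule.snd K M N = W.map (LinearMap.inr K M N) := by
  ext x
  simp only [Submodule.mem_inf, Submodule.snd, Submodule.mem_comap, Submodule.mem_bot, fst_apply, Submodule.mem_map, inr_apply]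
  constructor
  · rintro ⟨hx, hx1⟩
    refine ⟨x.2, ?_, ?_⟩
    · rw [← inr_mem_graphSub (f := f)]
      have : ((0 : M), x.2) = x := by rw [← hx1]
      rwa [this]
    · exact Prod.ext hx1.symm rfl
  · rintro ⟨b, hb, rfl⟩
    exact ⟨inr_mem_graphSub.mpr hb, rfl⟩

/-- mk of second coordinates agree for elements of `L` with equal first coordinates. -/
lemma graph_wd (L : Submodule K (M × N)) {x y : M × N} (hx : x ∈ L) (hy : y ∈ L)
    (h1 : x.1 = y.1) :
    (Submodule.Quotient.mk x.2 : N ⧸ L.comap (LinearMap.inr K M N)) = Submodule.Quotient.mk y.2 := by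
  rw [Submodule.Quotient.eq]
  have : ((0 : M), x.2 - y.2) ∈ L := by
    have := L.sub_mem hx hy
    have hxy : x - y = (0, x.2 - y.2) := by
      ext
      · simp [h1]
      · rfl
    rwa [hxy] at this
  simpa only [Submodule.mem_comap, inr_apply] using this

/-- The linear map `L.map fst →ₗ N ⧸ L.comap inr` induced by a submodule `L ≤ M × N`. -/
noncomputable def graphFun (L : Submodule K (M × N)) :
    (L.map (LinearMap.fst K M N)) →ₗ[K] N ⧸ L.comap (LinearMap.inr K M N) where
  toFun u := Submodule.Quotient.mk (Classical.choose (Submodule.mem_map.mp u.2)).2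
  map_add' := by
    rintro u v
    obtain ⟨hxu, hxu1⟩ := Classical.choose_spec (Submodule.mem_map.mp u.2)
    obtain ⟨hxv, hxv1⟩ := Classical.choose_spec (Submodule.mem_map.mp v.2)
    obtain ⟨hxw, hxw1⟩ := Classical.choose_spec (Submodule.mem_map.mp (u + v).2)
    rw [← Submodule.Quotient.mk_add]
    exact graph_wd L hxw (L.add_mem hxu hxv) (by
      simp only [fst_apply] at hxu1 hxv1 hxw1
      simp [hxw1, hxu1, hxv1])
  map_smul' := by
    rintro c u
    obtain ⟨hxu, hxu1⟩ := Classical.choose_spec (Submodule.mem_map.mp u.2)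
    obtain ⟨hxw, hxw1⟩ := Classical.choose_spec (Submodule.mem_map.mp (c • u).2)
    rw [RingHom.id_apply, ← Submodule.Quotient.mk_smul]
    exact graph_wd L hxw (L.smul_mem c hxu) (by
      simp only [fst_apply] at hxu1 hxw1
      simp [hxw1, hxu1])

lemma graphFun_spec (L : Submodule K (M × N)) {x : M × N} (hx : x ∈ L)
    (h : x.1 ∈ L.map (LinearMap.fst K M N)) :
    graphFun L ⟨x.1, h⟩ = Submodule.Quotient.mk x.2 := by
  obtain ⟨hy, hy1⟩ := Classical.choose_spec (Submodule.mem_map.mp h)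
  exact graph_wd L hy hx hy1

lemma graphSub_graphFun (L : Submodule K (M × N)) :
    graphSub (L.comap (LinearMap.inr K M N)) (L.map (LinearMap.fst K M N)) (graphFun L) = L := by
  ext x
  rw [mem_graphSub]
  constructor
  · rintro ⟨h, hx⟩
    obtain ⟨hy, hy1⟩ := Classical.choose_spec (Submodule.mem_map.mp h)
    set y := Classical.choose (Submodule.mem_map.mp h) with hy_def
    have hfx : graphFun L ⟨x.1, h⟩ = Submodule.Quotient.mk y.2 := rfl
    rw [hfx, Submodule.Quotient.eq] at hx
    simp only [Submodule.mem_comap, inr_apply] at hx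
    have : x = y + ((0 : M), x.2 - y.2) := by
      ext
      · simp only [fst_apply] at hy1
        simp [hy1]
      · simp
    rw [this]
    exact L.add_mem hy hx
  · intro hx
    refine ⟨Submodule.mem_map.mpr ⟨x, hx, rfl⟩, (graphFun_spec L hx _).symm⟩

variable (K M N) in
/-- Parameter space for submodules of `M × N`. -/
def GTriple := Σ (W : Submodule K N) (U : Submodule K M), (U →ₗ[K] N ⧸ W)

/-- The parametrization map. -/
def graphPhi (t : GTriple K M N) : Submodule K (M × N) := graphSub t.1 t.2.1 t.2.2

lemma graphPhi_bijective : Function.Bijective (graphPhi (K := K) (M := M) (N := N)) := by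
  constructor
  · rintro ⟨W, U, f⟩ ⟨W', U', f'⟩ h
    simp only [graphPhi] at h
    obtain rfl : W = W' := by rw [← graphSub_comap_inr W U f, h, graphSub_comap_inr]
    obtain rfl : U = U' := by rw [← graphSub_map_fst W U f, h, graphSub_map_fst]
    suffices hf : f = f' by rw [hf]
    ext u
    obtain ⟨b, hb⟩ := Submodule.Quotient.mk_surjective W (f u)
    have h1 : ((u.1, b) : M × N) ∈ graphSub W U f := by
      refine ⟨u.2, ?_⟩
      rw [hb]
    rw [h] at h1
    obtain ⟨h2, h3⟩ := h1
    have : (⟨(u.1, b).1, h2⟩ : U) = u := Subtype.ext rfl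
    rw [this] at h3
    rw [← hb, h3]
  · intro L
    exact ⟨⟨L.comap (LinearMap.inr K M N), L.map (LinearMap.fst K M N), graphFun L⟩,
      graphSub_graphFun L⟩

section finrank
variable [FiniteDimensional K M] [FiniteDimensional K N]

lemma finrank_graphSub_inf_snd (W : Submodule K N) (U : Submodule K M) (f : U →ₗ[K] N ⧸ W) :
    Module.finrank K ↥(graphSub W U f ⊓ Submodule.snd K M N) = Module.finrank K W := by
  rw [graphSub_inf_snd]
  exact (Submodule.equivMapOfInjective _ LinearMap.inr_injective W).finrank_eq.symm

lemma finrank_graphSub (W : Submodule K N) (U : Submodule K M) (f : U →ₗ[K] N ⧸ W) :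
    Module.finrank K ↥(graphSub W U f) = Module.finrank K U + Module.finrank K W := by
  set L := graphSub W U f with hL
  let g : L →ₗ[K] M := (LinearMap.fst K M N).comp L.subtype
  have hrange : LinearMap.range g = U := by
    rw [LinearMap.range_comp, Submodule.range_subtype, hL, graphSub_map_fst]
  have hker : LinearMap.ker g = Submodule.comap L.subtype (Submodule.snd K M N) := by
    rw [LinearMap.ker_comp]
    rfl
  have h1 : Module.finrank K ↥(LinearMap.ker g)
      = Module.finrank K ↥(Submodule.snd K M N ⊓ L) := by
    rw [hker]
    have : Submodule.comap L.subtype (Submodule.snd K M N)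
        = Submodule.comap L.subtype (Submodule.snd K M N ⊓ L) := by
      rw [Submodule.comap_inf, Submodule.comap_subtype_self, inf_top_eq]
    rw [this]
    exact (Submodule.comapSubtypeEquivOfLe inf_le_right).finrank_eq
  have h2 := g.finrank_range_add_finrank_ker
  rw [hrange, h1, inf_comm, finrank_graphSub_inf_snd] at h2
  exact h2.symm

end finrank

end goursat

lemma nat_card_sigma {ι : Type*} [Fintype ι] (f : ι → Type*) [∀ i, Finite (f i)] :
    Nat.card (Σ i, f i) = ∑ i, Nat.card (f i) := by
  letI : ∀ i, Fintype (f i) := fun i => Fintype.ofFinite _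
  simp [Nat.card_eq_fintype_card, Fintype.card_sigma]

section grass
variable {K V : Type*} [Field K] [Fintype K] [AddCommGroup V] [Module K V] [Finite V]

lemma grass_sigma_ext {k : ℕ} (W₁ W₂ : {W : Submodule K V // Module.finrank K W = k})
    (s₁ : {s : Fin k → W₁.1 // LinearIndependent K s})
    (s₂ : {s : Fin k → W₂.1 // LinearIndependent K s}) (hW : W₁.1 = W₂.1)
    (hs : ∀ i, ((s₁.1 i : V)) = (s₂.1 i : V)) :
    (⟨W₁, s₁⟩ : Σ W : {W : Submodule K V // Module.finrank K W = k},
      {s : Fin k → W.1 // LinearIndependent K s}) = ⟨W₂, s₂⟩ := by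
  rcases W₁ with ⟨W₁, h₁⟩
  rcases W₂ with ⟨W₂, h₂⟩
  dsimp at hW
  subst hW
  obtain rfl : s₁ = s₂ := Subtype.ext (funext fun i => Subtype.ext (hs i))
  rfl

lemma card_grassmannian {k : ℕ} (hk : k ≤ Module.finrank K V) :
    Nat.card {W : Submodule K V // Module.finrank K W = k} *
      ∏ i : Fin k, (Fintype.card K ^ k - Fintype.card K ^ (i : ℕ)) =
    ∏ i : Fin k, (Fintype.card K ^ Module.finrank K V - Fintype.card K ^ (i : ℕ)) := by
  classical
  letI : Fintype {W : Submodule K V // Module.finrank K ↥W = k} := Fintype.ofFinite _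
  have e : {s : Fin k → V // LinearIndependent K s} ≃
      Σ W : {W : Submodule K V // Module.finrank K W = k},
        {s : Fin k → W.1 // LinearIndependent K s} :=
    { toFun := fun s =>
        ⟨⟨Submodule.span K (Set.range s.1), by
            rw [finrank_span_eq_card s.2, Fintype.card_fin]⟩,
          ⟨fun i => ⟨s.1 i, Submodule.subset_span (Set.mem_range_self i)⟩,
            LinearIndependent.of_comp (Submodule.span K (Set.range s.1)).subtype s.2⟩⟩
      invFun := fun t =>
        ⟨fun i => (t.2.1 i : V), t.2.2.map' t.1.1.subtype (Submodule.ker_subtype _)⟩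
      left_inv := fun s => Subtype.ext (funext fun i => rfl)
      right_inv := by
        rintro ⟨⟨W, hW⟩, s⟩
        refine grass_sigma_ext _ _ _ _ ?_ (fun i => rfl)
        dsimp only
        have h1 : Set.range (fun i => ((s.1 i : W) : V)) = W.subtype '' Set.range s.1 := by
          rw [← Set.range_comp]; rfl
        rw [h1, ← Submodule.map_span]
        have h2 : Submodule.span K (Set.range s.1) = ⊤ :=
          s.2.span_eq_top_of_card_eq_finrank' (by rw [Fintype.card_fin, hW])
        rw [h2, Submodule.map_subtype_top] }
  have h1 := card_linearIndependent (K := K) (V := V) hk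
  rw [Nat.card_congr e] at h1
  rw [nat_card_sigma] at h1
  have h2 : ∀ W : {W : Submodule K V // Module.finrank K W = k},
      Nat.card {s : Fin k → W.1 // LinearIndependent K s}
        = ∏ i : Fin k, (Fintype.card K ^ k - Fintype.card K ^ (i : ℕ)) := by
    intro W
    have := card_linearIndependent (K := K) (V := W.1) (k := k) (le_of_eq W.2.symm)
    rwa [W.2] at this
  rw [Finset.sum_congr rfl (fun W _ => h2 W), Finset.sum_const, Finset.card_univ,
    ← Nat.card_eq_fintype_card, smul_eq_mul] at h1
  exact h1

end grass

section count
variable {K : Type*} [Field K] [Fintype K]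

local notation "q" => Fintype.card K

lemma finite_linearMap {V W : Type*} [AddCommGroup V] [Module K V] [AddCommGroup W] [Module K W]
    [Finite V] [Finite W] : Finite (V →ₗ[K] W) :=
  Finite.of_injective (fun f => (f : V → W)) DFunLike.coe_injective

lemma card_linearMap {V W : Type*} [AddCommGroup V] [Module K V] [AddCommGroup W] [Module K W]
    [Finite V] [Finite W] : Nat.card (V →ₗ[K] W) = q ^ (Module.finrank K V * Module.finrank K W) := by
  have : Finite (V →ₗ[K] W) := finite_linearMap
  letI : Fintype (V →ₗ[K] W) := Fintype.ofFinite _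
  have : FiniteDimensional K V := Module.Finite.of_finite
  have : FiniteDimensional K W := Module.Finite.of_finite
  rw [Nat.card_eq_fintype_card, Module.card_eq_pow_finrank (K := K), Module.finrank_linearMap]

theorem card_S (n k : ℕ) (hk : k ≤ n) :
    Nat.card {L : Submodule K ((Fin n → K) × (Fin n → K)) //
        Module.finrank K L = n ∧
        Module.finrank K ↥(L ⊓ Submodule.snd K (Fin n → K) (Fin n → K)) = k}
      = Nat.card {W : Submodule K (Fin n → K) // Module.finrank K W = k} *
        Nat.card {U : Submodule K (Fin n → K) // Module.finrank K U = n - k} *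
        q ^ ((n - k) * (n - k)) := by
  classical
  set V := Fin n → K
  have hV : Module.finrank K V = n := by simp [V, Module.finrank_pi]
  -- step 1: transfer along graphPhi
  have e1 : {L : Submodule K (V × V) //
        Module.finrank K L = n ∧ Module.finrank K ↥(L ⊓ Submodule.snd K V V) = k} ≃
      {t : GTriple K V V // Module.finrank K ↥(t.2.1) = n - k ∧ Module.finrank K ↥(t.1) = k} := by
    refine ((Equiv.ofBijective _ graphPhi_bijective).subtypeEquiv ?_).symm
    rintro ⟨W, U, f⟩
    show (Module.finrank K ↥U = n - k ∧ Module.finrank K ↥W = k) ↔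
      (Module.finrank K ↥(graphSub W U f) = n ∧
        Module.finrank K ↥(graphSub W U f ⊓ Submodule.snd K V V) = k)
    rw [finrank_graphSub, finrank_graphSub_inf_snd]
    omega
  -- step 2: regroup
  have e2 : {t : GTriple K V V //
        Module.finrank K ↥(t.2.1) = n - k ∧ Module.finrank K ↥(t.1) = k} ≃
      Σ (W : {W : Submodule K V // Module.finrank K W = k})
        (U : {U : Submodule K V // Module.finrank K U = n - k}), (U.1 →ₗ[K] V ⧸ W.1) :=
    { toFun := fun t => ⟨⟨t.1.1, t.2.2⟩, ⟨t.1.2.1, t.2.1⟩, t.1.2.2⟩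
      invFun := fun s => ⟨⟨s.1.1, s.2.1.1, s.2.2⟩, s.2.1.2, s.1.2⟩
      left_inv := fun t => rfl
      right_inv := fun s => rfl }
  rw [Nat.card_congr (e1.trans e2)]
  letI : Fintype {W : Submodule K V // Module.finrank K W = k} := Fintype.ofFinite _
  letI : Fintype {U : Submodule K V // Module.finrank K U = n - k} := Fintype.ofFinite _
  have hfin : ∀ (W : Submodule K V) (U : Submodule K V), Finite (U →ₗ[K] V ⧸ W) :=
    fun W U => finite_linearMap
  rw [nat_card_sigma]
  have hcard : ∀ (W : {W : Submodule K V // Module.finrank K W = k})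
      (U : {U : Submodule K V // Module.finrank K U = n - k}),
      Nat.card (U.1 →ₗ[K] V ⧸ W.1) = q ^ ((n - k) * (n - k)) := by
    intro W U
    rw [card_linearMap, U.2]
    congr 2
    have := Submodule.finrank_quotient_add_finrank W.1
    rw [W.2, hV] at this
    omega
  have : ∀ W : {W : Submodule K V // Module.finrank K W = k},
      Nat.card (Σ (U : {U : Submodule K V // Module.finrank K U = n - k}), (U.1 →ₗ[K] V ⧸ W.1))
        = Nat.card {U : Submodule K V // Module.finrank K U = n - k} * q ^ ((n - k) * (n - k)) := by
    intro W
    rw [nat_card_sigma, Finset.sum_congr rfl (fun U _ => hcard W U), Finset.sum_const,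
      Finset.card_univ, ← Nat.card_eq_fintype_card, smul_eq_mul]
  rw [Finset.sum_congr rfl (fun W _ => this W), Finset.sum_const, Finset.card_univ,
    ← Nat.card_eq_fintype_card, smul_eq_mul, mul_assoc]

end count

section analysis

open Finset

/-- Cast a product of `q^n - q^i` to reals in normalized form. -/
lemma claimA (q : ℕ) (hq : 1 < q) {j n : ℕ} (hj : j ≤ n) :
    ((∏ i ∈ Finset.range j, (q ^ n - q ^ i) : ℕ) : ℝ)
      = (q : ℝ) ^ (n * j) * ∏ m ∈ Finset.Ioc (n - j) n, (1 - ((q : ℝ)⁻¹) ^ m) := by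
  have hq0 : (0 : ℝ) < (q : ℝ) := by positivity
  have hcast : ((∏ i ∈ Finset.range j, (q ^ n - q ^ i) : ℕ) : ℝ)
      = ∏ i ∈ Finset.range j, ((q : ℝ) ^ n - (q : ℝ) ^ i) := by
    rw [Nat.cast_prod]
    refine Finset.prod_congr rfl fun i hi => ?_
    have hle : q ^ i ≤ q ^ n :=
      Nat.pow_le_pow_right (le_of_lt hq) (le_trans (le_of_lt (Finset.mem_range.mp hi)) hj)
    push_cast [Nat.cast_sub hle]
    ring
  rw [hcast]
  have hfac : ∀ i ∈ Finset.range j,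
      (q : ℝ) ^ n - (q : ℝ) ^ i = (q : ℝ) ^ n * (1 - ((q : ℝ)⁻¹) ^ (n - i)) := by
    intro i hi
    have hin : i ≤ n := le_trans (le_of_lt (Finset.mem_range.mp hi)) hj
    have : (q : ℝ) ^ n * ((q : ℝ)⁻¹) ^ (n - i) = (q : ℝ) ^ i := by
      rw [inv_pow, pow_sub₀ _ (ne_of_gt hq0) hin]
      field_simp
    rw [mul_sub, mul_one, this]
  rw [Finset.prod_congr rfl hfac, Finset.prod_mul_distrib, Finset.prod_const,
    Finset.card_range, ← pow_mul]
  congr 1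
  refine Finset.prod_nbij' (fun i => n - i) (fun m => n - m) ?_ ?_ ?_ ?_ ?_
  · intro i hi
    simp only [Finset.mem_range] at hi
    simp only [Finset.mem_Ioc]
    omega
  · intro m hm
    simp only [Finset.mem_Ioc] at hm
    simp only [Finset.mem_range]
    omega
  · intro i hi
    simp only [Finset.mem_range] at hi
    omega
  · intro m hm
    simp only [Finset.mem_Ioc] at hm
    omega
  · intro i hi
    rfl

variable {K : Type*} [Field K] [Fintype K]

local notation "q" => Fintype.card K

/-- The exact value of the normalized count, for `k ≤ n`. -/
lemma a_eq (n k : ℕ) (hk : k ≤ n) :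
    ((q : ℝ))⁻¹ ^ (n ^ 2) *
        (Nat.card {L : Submodule K ((Fin n → K) × (Fin n → K)) //
            Module.finrank K L = n ∧
            Module.finrank K ↥(L ⊓ Submodule.snd K (Fin n → K) (Fin n → K)) = k} : ℝ)
      = ((q : ℝ))⁻¹ ^ (k ^ 2) *
          (∏ m ∈ Finset.Ioc (n - k) n, (1 - ((q : ℝ)⁻¹) ^ m)) ^ 2 /
          (∏ m ∈ Finset.Ioc 0 k, (1 - ((q : ℝ)⁻¹) ^ m)) ^ 2 := by
  have hq : 1 < q := Fintype.one_lt_card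
  have hx : (1 : ℝ) < (q : ℝ) := by exact_mod_cast hq
  have hx0 : (0 : ℝ) < (q : ℝ) := lt_trans one_pos hx
  have hr1 : (q : ℝ)⁻¹ < 1 := by
    rw [inv_lt_one_iff₀]; right; exact hx
  have hr0 : (0 : ℝ) ≤ (q : ℝ)⁻¹ := by positivity
  have Qpos : ∀ a b : ℕ, (0 : ℝ) < ∏ m ∈ Finset.Ioc a b, (1 - ((q : ℝ)⁻¹) ^ m) := by
    intro a b
    refine Finset.prod_pos fun m hm => ?_
    have hm1 : m ≠ 0 := by
      have := (Finset.mem_Ioc.mp hm).1; omega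
    have : ((q : ℝ)⁻¹) ^ m < 1 := pow_lt_one₀ hr0 hr1 hm1
    linarith
  -- the finrank of Fin n → K
  have hV : Module.finrank K (Fin n → K) = n := by
    simp [Module.finrank_pi]
  -- counting facts
  have hS := card_S (K := K) n k hk
  have hW := card_grassmannian (K := K) (V := Fin n → K) (k := k) (by rw [hV]; exact hk)
  have hU := card_grassmannian (K := K) (V := Fin n → K) (k := n - k)
    (by rw [hV]; omega)
  rw [hV] at hW hU
  set cS : ℕ := Nat.card {L : Submodule K ((Fin n → K) × (Fin n → K)) //
      Module.finrank K L = n ∧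
      Module.finrank K ↥(L ⊓ Submodule.snd K (Fin n → K) (Fin n → K)) = k} with hcS
  set cW : ℕ := Nat.card {W : Submodule K (Fin n → K) // Module.finrank K W = k} with hcW
  set cU : ℕ := Nat.card {U : Submodule K (Fin n → K) // Module.finrank K U = n - k} with hcU
  -- convert Fin products to range products
  rw [Fin.prod_univ_eq_prod_range (fun i => q ^ k - q ^ i) k,
    Fin.prod_univ_eq_prod_range (fun i => q ^ n - q ^ i) k] at hW
  rw [Fin.prod_univ_eq_prod_range (fun i => q ^ (n - k) - q ^ i) (n - k),
    Fin.prod_univ_eq_prod_range (fun i => q ^ n - q ^ i) (n - k)] at hU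
  -- cast to ℝ
  set x : ℝ := (q : ℝ)
  set P1 : ℝ := ∏ m ∈ Finset.Ioc (n - k) n, (1 - x⁻¹ ^ m) with hP1
  set P0 : ℝ := ∏ m ∈ Finset.Ioc 0 k, (1 - x⁻¹ ^ m) with hP0
  set P2 : ℝ := ∏ m ∈ Finset.Ioc 0 (n - k), (1 - x⁻¹ ^ m) with hP2
  set P3 : ℝ := ∏ m ∈ Finset.Ioc k n, (1 - x⁻¹ ^ m) with hP3
  have f2 : (cW : ℝ) * (x ^ (k * k) * P0) = x ^ (n * k) * P1 := by
    have := congrArg (fun t : ℕ => (t : ℝ)) hW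
    simp only [Nat.cast_mul] at this
    rw [claimA _ hq (le_refl k), claimA _ hq hk] at this
    rw [Nat.sub_self] at this
    exact this
  have f3 : (cU : ℝ) * (x ^ ((n - k) * (n - k)) * P2) = x ^ (n * (n - k)) * P3 := by
    have := congrArg (fun t : ℕ => (t : ℝ)) hU
    simp only [Nat.cast_mul] at this
    rw [claimA _ hq (le_refl (n - k)), claimA _ hq (Nat.sub_le n k)] at this
    have hnn : n - (n - k) = k := by omega
    rw [Nat.sub_self, hnn] at this
    exact this
  have f1 : (cS : ℝ) = (cW : ℝ) * (cU : ℝ) * x ^ ((n - k) * (n - k)) := by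
    have := congrArg (fun t : ℕ => (t : ℝ)) hS
    push_cast at this
    exact this
  have f4 : P0 * P3 = P2 * P1 := by
    rw [hP0, hP3, hP2, hP1, Finset.prod_Ioc_consecutive _ (Nat.zero_le k) hk,
      Finset.prod_Ioc_consecutive _ (Nat.zero_le (n - k)) (Nat.sub_le n k)]
  -- intermediate identity
  have hI : (cS : ℝ) * (P0 * P2) * x ^ (k * k + (n - k) * (n - k))
      = x ^ ((n - k) * (n - k) + n * n) * (P1 * P3) := by
    rw [f1]
    calc (cW : ℝ) * (cU : ℝ) * x ^ ((n - k) * (n - k)) * (P0 * P2) *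
          x ^ (k * k + (n - k) * (n - k))
        = ((cW : ℝ) * (x ^ (k * k) * P0)) * ((cU : ℝ) * (x ^ ((n - k) * (n - k)) * P2)) *
          x ^ ((n - k) * (n - k)) := by rw [pow_add]; ring
      _ = (x ^ (n * k) * P1) * (x ^ (n * (n - k)) * P3) * x ^ ((n - k) * (n - k)) := by
          rw [f2, f3]
      _ = x ^ (n * k + n * (n - k) + (n - k) * (n - k)) * (P1 * P3) := by
          rw [pow_add, pow_add]; ring
      _ = x ^ ((n - k) * (n - k) + n * n) * (P1 * P3) := by
          have hexp : n * k + n * (n - k) + (n - k) * (n - k)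
              = (n - k) * (n - k) + n * n := by
            have h1 : n * k + n * (n - k) = n * n := by
              rw [← Nat.mul_add, Nat.add_sub_cancel' hk]
            omega
          rw [hexp]
  have hII : (cS : ℝ) * P0 ^ 2 * x ^ (k * k) = x ^ (n * n) * P1 ^ 2 := by
    have hc : P2 * x ^ ((n - k) * (n - k)) ≠ 0 :=
      ne_of_gt (mul_pos (Qpos 0 (n - k)) (pow_pos hx0 _))
    apply mul_right_cancel₀ hc
    calc (cS : ℝ) * P0 ^ 2 * x ^ (k * k) * (P2 * x ^ ((n - k) * (n - k)))
        = ((cS : ℝ) * (P0 * P2) * x ^ (k * k + (n - k) * (n - k))) * P0 := by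
          rw [pow_add]; ring
      _ = x ^ ((n - k) * (n - k) + n * n) * (P1 * P3) * P0 := by rw [hI]
      _ = x ^ ((n - k) * (n - k) + n * n) * P1 * (P0 * P3) := by ring
      _ = x ^ ((n - k) * (n - k) + n * n) * P1 * (P2 * P1) := by rw [f4]
      _ = x ^ (n * n) * P1 ^ 2 * (P2 * x ^ ((n - k) * (n - k))) := by
          rw [pow_add]; ring
  -- finish
  have hP0sq : (0 : ℝ) < x ^ (k * k) * P0 ^ 2 :=
    mul_pos (pow_pos hx0 _) (pow_pos (Qpos 0 k) 2)
  rw [pow_two n, pow_two k, inv_pow, inv_pow, inv_mul_eq_div, inv_mul_eq_div, div_div,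
    div_eq_div_iff (ne_of_gt (pow_pos hx0 _)) (ne_of_gt hP0sq)]
  linear_combination hII
end analysis

/-- For fixed `k`, the normalized count
`q^{-n^2} · #{n-dimensional subspaces L of F_q^{2n} with dim(L ∩ (0 ⊕ F_q^n)) = k}`
converges as `n → ∞` to `q^{-k^2} / ∏_{j=1}^k (1 − q^{-j})^2`. -/
theorem normalized_count_intersection_tendsto (K : Type*) [Field K] [Fintype K] (k : ℕ) :
    Tendsto (fun n : ℕ => ((Fintype.card K : ℝ))⁻¹ ^ (n ^ 2) *
        (Nat.card {L : Submodule K ((Fin n → K) × (Fin n → K)) //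
            Module.finrank K L = n ∧
            Module.finrank K ↥(L ⊓ Submodule.snd K (Fin n → K) (Fin n → K)) = k} : ℝ))
      atTop
      (nhds (((Fintype.card K : ℝ))⁻¹ ^ (k ^ 2) /
        ∏ j ∈ Finset.Icc 1 k, (1 - ((Fintype.card K : ℝ))⁻¹ ^ j) ^ 2)) := by
  have hq : 1 < Fintype.card K := Fintype.one_lt_card
  set x : ℝ := (Fintype.card K : ℝ) with hx_def
  have hx : (1 : ℝ) < x := by rw [hx_def]; exact_mod_cast hq
  have hx0 : (0 : ℝ) < x := lt_trans one_pos hx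
  have hr1 : x⁻¹ < 1 := by rw [inv_lt_one_iff₀]; right; exact hx
  have hr0 : (0 : ℝ) ≤ x⁻¹ := by positivity
  set C : ℝ := (∏ m ∈ Finset.Ioc 0 k, (1 - x⁻¹ ^ m)) ^ 2 with hC
  set Q : ℕ → ℝ := fun n => ∏ m ∈ Finset.Ioc (n - k) n, (1 - x⁻¹ ^ m) with hQ
  -- limit of Q
  have hQle1 : ∀ n : ℕ, Q n ≤ 1 := by
    intro n
    refine Finset.prod_le_one (fun m _ => ?_) (fun m _ => ?_)
    · have : x⁻¹ ^ m ≤ 1 := pow_le_one₀ hr0 (le_of_lt hr1)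
      linarith
    · have : (0 : ℝ) ≤ x⁻¹ ^ m := by positivity
      linarith
  have hQge : ∀ n : ℕ, n ≥ k → (1 - x⁻¹ ^ (n - k)) ^ k ≤ Q n := by
    intro n hn
    have hcard : (Finset.Ioc (n - k) n).card = k := by
      rw [Nat.card_Ioc]; omega
    have hc0 : (0 : ℝ) ≤ 1 - x⁻¹ ^ (n - k) := by
      have : x⁻¹ ^ (n - k) ≤ 1 := pow_le_one₀ hr0 (le_of_lt hr1)
      linarith
    calc (1 - x⁻¹ ^ (n - k)) ^ k
        = ∏ _m ∈ Finset.Ioc (n - k) n, (1 - x⁻¹ ^ (n - k)) := by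
          rw [Finset.prod_const, hcard]
      _ ≤ Q n := by
          refine Finset.prod_le_prod (fun m _ => hc0) (fun m hm => ?_)
          have hm' := (Finset.mem_Ioc.mp hm).1
          have : x⁻¹ ^ m ≤ x⁻¹ ^ (n - k) :=
            pow_le_pow_of_le_one hr0 (le_of_lt hr1) (le_of_lt hm')
          linarith
  have hrlim : Tendsto (fun m : ℕ => x⁻¹ ^ m) atTop (nhds 0) :=
    tendsto_pow_atTop_nhds_zero_of_lt_one hr0 hr1
  have hllim : Tendsto (fun n : ℕ => (1 - x⁻¹ ^ (n - k)) ^ k) atTop (nhds 1) := by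
    have h1 : Tendsto (fun m : ℕ => (1 - x⁻¹ ^ m) ^ k) atTop (nhds 1) := by
      have := ((tendsto_const_nhds (x := (1 : ℝ)) (f := atTop)).sub hrlim).pow k
      simpa using this
    exact h1.comp (tendsto_sub_atTop_nat k)
  have hQlim : Tendsto Q atTop (nhds 1) := by
    refine tendsto_of_tendsto_of_tendsto_of_le_of_le' hllim tendsto_const_nhds ?_ ?_
    · exact Filter.eventually_atTop.mpr ⟨k, hQge⟩
    · exact Filter.Eventually.of_forall hQle1
  -- limit of the closed form
  have hmain : Tendsto (fun n : ℕ => x⁻¹ ^ (k ^ 2) * (Q n) ^ 2 / C) atTop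
      (nhds (x⁻¹ ^ (k ^ 2) / ∏ j ∈ Finset.Icc 1 k, (1 - x⁻¹ ^ j) ^ 2)) := by
    have h2 : Tendsto (fun n : ℕ => x⁻¹ ^ (k ^ 2) * (Q n) ^ 2 / C) atTop
        (nhds (x⁻¹ ^ (k ^ 2) * 1 ^ 2 / C)) :=
      (tendsto_const_nhds.mul (hQlim.pow 2)).div_const C
    have he : Finset.Icc 1 k = Finset.Ioc 0 k := by
      ext m
      simp only [Finset.mem_Icc, Finset.mem_Ioc]
      omega
    have h3 : x⁻¹ ^ (k ^ 2) * 1 ^ 2 / C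
        = x⁻¹ ^ (k ^ 2) / ∏ j ∈ Finset.Icc 1 k, (1 - x⁻¹ ^ j) ^ 2 := by
      rw [hC, one_pow, mul_one, ← Finset.prod_pow, he]
    rwa [h3] at h2
  -- eventual equality
  refine hmain.congr' (Filter.eventually_atTop.mpr ⟨k, fun n hn => ?_⟩)
  exact (a_eq n k hn).symm
end
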